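/- For γ > 1 and p > 1, let k = (p γ^p (γ-1) - γ(γ^p - 1)) / (γ^p - 1 - p(γ-1)) and Q = (γ^p + k)(1+k)^{p-1}/(γ+k)^p. Then Q ≤ γ^{p-1}. -/

import Mathlib

theorem stmt_10 (p γ : ℝ) (hp : 1 < p) (hγ : 1 < γ)
    (k Q : ℝ)
    (hk : k = (p * γ ^ p * (γ - 1) - γ * (γ ^ p - 1)) / (γ ^ p - 1 - p * (γ - 1)))
    (hQ : Q = (γ ^ p + k) * (1 + k) ^ (p - 1) / (γ + k) ^ p) :
    Q ≤ γ ^ (p - 1) := by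
  have hp0 : (0:ℝ) < p := by linarith
  have hγ0 : (0:ℝ) < γ := by linarith
  have hγp0 : (0:ℝ) < γ ^ p := Real.rpow_pos_of_pos hγ0 p
  -- k is nonnegative
  have hden : 0 ≤ γ ^ p - 1 - p * (γ - 1) := by
    have h := one_add_mul_self_le_rpow_one_add (s := γ - 1) (by linarith) hp.le
    rw [show (1 : ℝ) + (γ - 1) = γ by ring] at h
    linarith
  have hnum : 0 ≤ p * γ ^ p * (γ - 1) - γ * (γ ^ p - 1) := by
    have hinv0 : (0:ℝ) ≤ γ⁻¹ := by positivity
    have h := one_add_mul_self_le_rpow_one_add (s := γ⁻¹ - 1) (by linarith) hp.le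
    rw [show (1 : ℝ) + (γ⁻¹ - 1) = γ⁻¹ by ring, Real.inv_rpow hγ0.le] at h
    have h2 := mul_le_mul_of_nonneg_left h (by positivity : (0:ℝ) ≤ γ * γ ^ p)
    have e1 : γ * γ⁻¹ = 1 := mul_inv_cancel₀ hγ0.ne'
    have e2 : γ ^ p * (γ ^ p)⁻¹ = 1 := mul_inv_cancel₀ hγp0.ne'
    have h6 : γ * γ ^ p * (γ ^ p)⁻¹ = γ := by rw [mul_assoc, e2, mul_one]
    have h7 : γ * γ ^ p * (1 + p * (γ⁻¹ - 1)) = γ * γ ^ p + p * γ ^ p - p * γ * γ ^ p := by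
      linear_combination p * γ ^ p * e1
    rw [h6, h7] at h2
    linarith
  have hk0 : 0 ≤ k := hk ▸ div_nonneg hnum hden
  -- main estimate via weighted AM-GM
  set A : ℝ := γ + k * γ ^ (1 - p) with hA_def
  set B : ℝ := 1 + k with hB_def
  have hA : 0 ≤ A := by
    have : 0 ≤ k * γ ^ (1 - p) := mul_nonneg hk0 (Real.rpow_nonneg hγ0.le _)
    simp only [hA_def]; linarith
  have hB : 0 ≤ B := by simp only [hB_def]; linarith
  have hw : 1 / p + (p - 1) / p = 1 := by field_simp; ring
  have hgm := Real.geom_mean_le_arith_mean2_weighted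
    (by positivity : (0:ℝ) ≤ 1 / p) (div_nonneg (by linarith) hp0.le) hA hB hw
  have hγ1p : γ ^ (1 - p) ≤ 1 :=
    Real.rpow_le_one_of_one_le_of_nonpos hγ.le (by linarith)
  have hkg : k * γ ^ (1 - p) ≤ k := by nlinarith
  have hlin : 1 / p * A + (p - 1) / p * B ≤ γ + k := by
    rw [← sub_nonneg]
    have heq : γ + k - (1 / p * A + (p - 1) / p * B)
        = (p * (γ + k) - (A + (p - 1) * B)) / p := by field_simp
    rw [heq]
    apply div_nonneg _ hp0.le
    have : p * (γ + k) - (A + (p - 1) * B)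
        = (p - 1) * (γ - 1) + (k - k * γ ^ (1 - p)) := by
      simp only [hA_def, hB_def]; ring
    nlinarith
  have hpow := Real.rpow_le_rpow (by positivity) (hgm.trans hlin) hp0.le
  rw [Real.mul_rpow (Real.rpow_nonneg hA _) (Real.rpow_nonneg hB _),
    ← Real.rpow_mul hA, ← Real.rpow_mul hB,
    one_div_mul_cancel hp0.ne', div_mul_cancel₀ _ hp0.ne', Real.rpow_one] at hpow
  -- assemble
  have hγk0 : (0:ℝ) < (γ + k) ^ p := Real.rpow_pos_of_pos (by linarith) p
  rw [hQ, div_le_iff₀ hγk0]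
  have e3 : γ ^ (p - 1) * γ = γ ^ p := by
    nth_rewrite 2 [← Real.rpow_one γ]
    rw [← Real.rpow_add hγ0]; norm_num
  have e4 : γ ^ (p - 1) * γ ^ (1 - p) = 1 := by
    rw [← Real.rpow_add hγ0]; norm_num
  have key : (γ ^ p + k) * (1 + k) ^ (p - 1) = γ ^ (p - 1) * (A * B ^ (p - 1)) := by
    simp only [hA_def, hB_def]
    linear_combination (-(1 + k) ^ (p - 1)) * e3 + (-(k * (1 + k) ^ (p - 1))) * e4
  rw [key]
  exact mul_le_mul_of_nonneg_left hpow (Real.rpow_nonneg hγ0.le _)
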